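/- Let f : H → G be a core-free virtual endomorphism of a group G. Let Ġ = G^{(ℕ)} ⋊ C₂ where the generator σ of C₂ acts by swapping coordinates 2n and 2n+1 for all n. Let Ḣ = H × G^{(ℕ∖{0})} ≤ G^{(ℕ)} ≤ Ġ and define ḟ : Ḣ → Ġ by ḟ(a₀, a₁, a₂, a₃, a₄, …) = (f(a₀), a₂, a₁, a₄, a₃, …). Then ḟ is a core-free virtual endomorphism of Ġ of index 2·[G:H]. -/

import Mathlib

/-- The restricted direct product `G^{(ℕ)}`: finitely supported functions `ℕ → G`. -/
def restrictedProd (G : Type*) [Group G] : Subgroup (ℕ → G) where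
  carrier := {g | Set.Finite {n | g n ≠ 1}}
  one_mem' := by simp
  mul_mem' := by
    intro a b ha hb
    exact Set.Finite.subset (ha.union hb) (by
      intro n hn
      by_contra h
      simp only [Set.mem_union, Set.mem_setOf_eq, not_or, not_not] at h
      simp [Set.mem_setOf_eq, Pi.mul_apply, h.1, h.2] at hn)
  inv_mem' := by
    intro a ha
    exact ha.subset (by intro n hn; simpa using hn)

/-- The involution of `ℕ` swapping `2n ↔ 2n+1`. -/
def swapIdx (n : ℕ) : ℕ := if n % 2 = 0 then n + 1 else n - 1

lemma swapIdx_involutive : Function.Involutive swapIdx := by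
  intro n
  rcases Nat.mod_two_eq_zero_or_one n with h | h
  · have h1 : swapIdx n = n + 1 := if_pos h
    have h2 : swapIdx (n + 1) = n + 1 - 1 := if_neg (by omega)
    rw [h1, h2]; omega
  · have h1 : swapIdx n = n - 1 := if_neg (by omega)
    have h2 : swapIdx (n - 1) = n - 1 + 1 := if_pos (by omega)
    rw [h1, h2]; omega

lemma mem_restrictedProd_comp {G : Type*} [Group G] (g : ↥(restrictedProd G))
    (e : ℕ → ℕ) (he : Function.Involutive e) :
    (fun n => (g : ℕ → G) (e n)) ∈ restrictedProd G := by
  have : {n | (g : ℕ → G) (e n) ≠ 1} ⊆ e ⁻¹' {n | (g : ℕ → G) n ≠ 1} := fun n hn => hn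
  exact Set.Finite.subset (Set.Finite.preimage (Set.injOn_of_injective he.injective) g.2) this

/-- The swap automorphism of `G^{(ℕ)}` exchanging coordinates `2n ↔ 2n+1`. -/
def swapAut (G : Type*) [Group G] : MulAut ↥(restrictedProd G) where
  toFun g := ⟨fun n => (g : ℕ → G) (swapIdx n), mem_restrictedProd_comp g _ swapIdx_involutive⟩
  invFun g := ⟨fun n => (g : ℕ → G) (swapIdx n), mem_restrictedProd_comp g _ swapIdx_involutive⟩
  left_inv g := Subtype.ext (funext fun n => congrArg (g : ℕ → G) (swapIdx_involutive n))
  right_inv g := Subtype.ext (funext fun n => congrArg (g : ℕ → G) (swapIdx_involutive n))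
  map_mul' a b := rfl

lemma swapAut_sq (G : Type*) [Group G] : swapAut G * swapAut G = 1 := by
  ext g n
  exact congrArg (g : ℕ → G) (swapIdx_involutive n)

/-- The action of `C₂ = Multiplicative (ZMod 2)` on `G^{(ℕ)}` by the swap. -/
def c2Action (G : Type*) [Group G] :
    Multiplicative (ZMod 2) →* MulAut ↥(restrictedProd G) :=
  MonoidHom.mk'
    (fun x => if x.toAdd = 0 then 1 else swapAut G)
    (by
      intro a b
      have key := swapAut_sq G
      have h2 : ∀ z : ZMod 2, z = 0 ∨ z = 1 := by decide
      rcases h2 a.toAdd with ha | ha <;> rcases h2 b.toAdd with hb | hb <;>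
        simp_all [toAdd_mul, show (1 : ZMod 2) + 1 = 0 from by decide, key]
      )

variable {G : Type*} [Group G]

/-- The group `Ġ = G^{(ℕ)} ⋊ C₂`. -/
abbrev GDot (G : Type*) [Group G] :=
  SemidirectProduct ↥(restrictedProd G) (Multiplicative (ZMod 2)) (c2Action G)

/-- The subgroup `Ḣ = H × G^{(ℕ∖{0})}` of `Ġ`. -/
def HDot (H : Subgroup G) : Subgroup (GDot G) where
  carrier := {x | x.right = 1 ∧ (x.left : ℕ → G) 0 ∈ H}
  one_mem' := ⟨rfl, H.one_mem⟩
  mul_mem' := by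
    rintro a b ⟨ha1, ha2⟩ ⟨hb1, hb2⟩
    refine ⟨by simp [SemidirectProduct.mul_right, ha1, hb1], ?_⟩
    have h : (a * b).left = a.left * b.left := by
      rw [SemidirectProduct.mul_left, ha1, map_one]; rfl
    rw [h]
    exact H.mul_mem ha2 hb2
  inv_mem' := by
    rintro a ⟨ha1, ha2⟩
    refine ⟨by simp [SemidirectProduct.inv_right, ha1], ?_⟩
    have h : (a⁻¹).left = a.left⁻¹ := by
      rw [SemidirectProduct.inv_left, ha1, inv_one, map_one]; rfl
    rw [h]
    exact H.inv_mem ha2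

/-- The index recoding `0 ↦ 0`, `odd n ↦ n+1`, `even n ≥ 2 ↦ n−1`, so that
`ḟ(a₀,a₁,a₂,a₃,…) = (f(a₀),a₂,a₁,a₄,a₃,…)`. -/
def recodeIdx (n : ℕ) : ℕ := if n = 0 then 0 else if n % 2 = 1 then n + 1 else n - 1

lemma recodeIdx_involutive : Function.Involutive recodeIdx := by
  intro n
  by_cases h0 : n = 0
  · simp [recodeIdx, h0]
  rcases Nat.mod_two_eq_zero_or_one n with h | h
  · have h1 : recodeIdx n = n - 1 := by
      unfold recodeIdx; rw [if_neg h0, if_neg (by omega)]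
    have h2 : recodeIdx (n - 1) = n - 1 + 1 := by
      unfold recodeIdx; rw [if_neg (by omega), if_pos (by omega)]
    rw [h1, h2]; omega
  · have h1 : recodeIdx n = n + 1 := by
      unfold recodeIdx; rw [if_neg h0, if_pos h]
    have h2 : recodeIdx (n + 1) = n + 1 - 1 := by
      unfold recodeIdx; rw [if_neg (by omega), if_neg (by omega)]
    rw [h1, h2]; omega

lemma left_mul_of_right_one (a b : GDot G) (ha : a.right = 1) :
    (a * b).left = a.left * b.left := by
  rw [SemidirectProduct.mul_left, ha, map_one]; rfl

/-- The virtual endomorphism `ḟ : Ḣ → Ġ`,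
`ḟ(a₀,a₁,a₂,a₃,…) = (f(a₀),a₂,a₁,a₄,a₃,…)`. -/
def fDot (H : Subgroup G) (f : ↥H →* G) : ↥(HDot H) →* GDot G :=
  MonoidHom.mk'
    (fun x => SemidirectProduct.inl
      ⟨fun n => if n = 0 then f ⟨((x : GDot G).left : ℕ → G) 0, x.2.2⟩
        else ((x : GDot G).left : ℕ → G) (recodeIdx n),
       by
        refine Set.Finite.subset (Set.Finite.union (Set.finite_singleton 0)
          (Set.Finite.preimage (Set.injOn_of_injective recodeIdx_involutive.injective)
            (x : GDot G).left.2)) ?_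
        intro n hn
        by_cases h : n = 0
        · exact Or.inl h
        · refine Or.inr ?_
          simpa [h] using hn⟩)
    (by
      intro a b
      rw [← map_mul]
      apply congrArg SemidirectProduct.inl
      apply Subtype.ext
      funext n
      have hl : ((a * b : ↥(HDot H)) : GDot G).left =
          (a : GDot G).left * (b : GDot G).left :=
        left_mul_of_right_one _ _ a.2.1
      by_cases h : n = 0
      · simp only [h, if_pos rfl]
        show f _ = f _ * f _
        rw [← map_mul]
        congr 1
        apply Subtype.ext
        show ((a * b : ↥(HDot H)) : GDot G).left.1 0 = _
        rw [hl]; rfl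
      · simp only [if_neg h]
        show ((a * b : ↥(HDot H)) : GDot G).left.1 (recodeIdx n) = _
        rw [hl]
        simp only [Subgroup.coe_mul, Pi.mul_apply, if_neg h])

/-- `f : H → G` is a core-free virtual endomorphism. -/
def CoreFree {G : Type*} [Group G] (H : Subgroup G) (f : ↥H →* G) : Prop :=
  ∀ K : Subgroup G, K ≤ H → K.Normal → (∀ x : ↥H, (x : G) ∈ K → f x ∈ K) → K = ⊥


/-- Evaluation at 0 as a homomorphism `G^{(ℕ)} →* G`. -/
def ev0 (G : Type*) [Group G] : ↥(restrictedProd G) →* G :=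
  (Pi.evalMonoidHom (fun _ : ℕ => G) 0).comp (restrictedProd G).subtype

lemma ev0_surjective (G : Type*) [Group G] : Function.Surjective (ev0 G) := by
  intro g
  have hfin : Set.Finite {n | Pi.mulSingle (M := fun _ : ℕ => G) 0 g n ≠ 1} := by
    refine Set.Finite.subset (Set.finite_singleton 0) ?_
    intro n hn
    simp only [Set.mem_singleton_iff]
    by_contra h
    exact hn (Pi.mulSingle_eq_of_ne (M := fun _ : ℕ => G) h g)
  exact ⟨⟨Pi.mulSingle (M := fun _ : ℕ => G) 0 g, hfin⟩,
    Pi.mulSingle_eq_same (M := fun _ : ℕ => G) 0 g⟩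

lemma c2Action_gen (G : Type*) [Group G] :
    c2Action G (Multiplicative.ofAdd 1) = swapAut G := by
  show (if ((Multiplicative.ofAdd (1 : ZMod 2)).toAdd = 0) then 1 else swapAut G) = swapAut G
  rw [if_neg (by decide)]

lemma mem_HDot_iff {G : Type*} [Group G] (H : Subgroup G) (x : GDot G) :
    x ∈ HDot H ↔ x.right = 1 ∧ (x.left : ℕ → G) 0 ∈ H := Iff.rfl

lemma eq_inl_left {G : Type*} [Group G] (x : GDot G) (h : x.right = 1) :
    x = SemidirectProduct.inl x.left := by
  cases x with
  | mk l r => cases h; rfl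

/-- if `f : H → G` is a core-free virtual endomorphism, then
`ḟ : Ḣ → Ġ = G^{(ℕ)} ⋊ C₂` is a core-free virtual endomorphism of index `2·[G:H]`. -/
theorem fDot_coreFree (H : Subgroup G) [H.FiniteIndex] (f : ↥H →* G)
    (hf : CoreFree H f) :
    CoreFree (HDot H) (fDot H f) ∧ (HDot H).index = 2 * H.index := by
  constructor
  · -- core-freeness
    intro K hKH hKn hKf
    -- `P` : the subgroup of `G^{(ℕ)}` corresponding to `K`
    set P : Subgroup ↥(restrictedProd G) := K.comap SemidirectProduct.inl with hP
    -- membership facts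
    have hP0 : ∀ a : ↥(restrictedProd G), a ∈ P → (a : ℕ → G) 0 ∈ H := by
      intro a ha
      exact ((mem_HDot_iff H _).1 (hKH ha)).2
    have hPmemH : ∀ a : ↥(restrictedProd G), a ∈ P →
        (SemidirectProduct.inl a : GDot G) ∈ HDot H := fun a ha => hKH ha
    -- swap stability of P
    have hswap : ∀ a : ↥(restrictedProd G), a ∈ P → swapAut G a ∈ P := by
      intro a ha
      show (SemidirectProduct.inl (swapAut G a) : GDot G) ∈ K
      rw [← c2Action_gen G, SemidirectProduct.inl_aut, map_inv]
      exact hKn.conj_mem _ ha (SemidirectProduct.inr (Multiplicative.ofAdd 1))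
    -- the ḟ-image inside P
    have hfstep : ∀ a : ↥(restrictedProd G), ∀ ha : a ∈ P,
        (fDot H f ⟨SemidirectProduct.inl a, hPmemH a ha⟩).left ∈ P := by
      intro a ha
      exact hKf ⟨SemidirectProduct.inl a, hPmemH a ha⟩ ha
    -- the image subgroup K₀ of G
    set K0 : Subgroup G := P.map (ev0 G) with hK0
    -- all coordinates of elements of P lie in K₀
    have hcoord : ∀ n : ℕ, ∀ a : ↥(restrictedProd G), a ∈ P → (a : ℕ → G) n ∈ K0 := by
      intro n
      induction n with
      | zero => intro a ha; exact ⟨a, ha, rfl⟩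
      | succ n ih =>
        intro a ha
        rcases Nat.mod_two_eq_zero_or_one n with hpar | hpar
        · -- n even : use the swap
          have h1 : swapIdx n = n + 1 := if_pos hpar
          have := ih (swapAut G a) (hswap a ha)
          show (a : ℕ → G) (n + 1) ∈ K0
          rw [← h1]
          exact this
        · -- n odd : use ḟ
          have h1 : recodeIdx n = n + 1 := by
            unfold recodeIdx; rw [if_neg (by omega), if_pos hpar]
          have h2 : ((fDot H f ⟨SemidirectProduct.inl a, hPmemH a ha⟩).left :
              ℕ → G) n = if n = 0 then f ⟨(a : ℕ → G) 0, hP0 a ha⟩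
              else (a : ℕ → G) (recodeIdx n) := rfl
          have := ih _ (hfstep a ha)
          rw [h2, if_neg (show n ≠ 0 by omega), h1] at this
          exact this
    -- K₀ is contained in H
    have hK0H : K0 ≤ H := by
      rintro g ⟨a, ha, rfl⟩
      exact hP0 a ha
    -- K₀ is normal in G
    have hK0n : K0.Normal := by
      constructor
      rintro g ⟨a, ha, rfl⟩ c
      have hsfin : Set.Finite {n | Pi.mulSingle (M := fun _ : ℕ => G) 0 c n ≠ 1} := by
        refine Set.Finite.subset (Set.finite_singleton 0) ?_
        intro n hn
        simp only [Set.mem_singleton_iff]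
        by_contra h
        exact hn (Pi.mulSingle_eq_of_ne (M := fun _ : ℕ => G) h c)
      set s : ↥(restrictedProd G) := ⟨Pi.mulSingle (M := fun _ : ℕ => G) 0 c, hsfin⟩ with hs
      have hmem : s * a * s⁻¹ ∈ P := by
        show (SemidirectProduct.inl (s * a * s⁻¹) : GDot G) ∈ K
        rw [map_mul, map_mul, map_inv]
        exact hKn.conj_mem _ ha _
      refine ⟨s * a * s⁻¹, hmem, ?_⟩
      show ((s * a * s⁻¹ : ↥(restrictedProd G)) : ℕ → G) 0 = c * (ev0 G a) * c⁻¹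
      have : ((s : ℕ → G) 0) = c := Pi.mulSingle_eq_same (M := fun _ : ℕ => G) 0 c
      simp only [Subgroup.coe_mul, Subgroup.coe_inv, Pi.mul_apply, Pi.inv_apply, this]
      rfl
    -- K₀ is f-invariant
    have hK0f : ∀ x : ↥H, (x : G) ∈ K0 → f x ∈ K0 := by
      rintro x hx
      obtain ⟨a, ha, hax⟩ := hx
      refine ⟨_, hfstep a ha, ?_⟩
      have h2 : ev0 G (fDot H f ⟨SemidirectProduct.inl a, hPmemH a ha⟩).left =
          f ⟨(a : ℕ → G) 0, hP0 a ha⟩ := rfl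
      rw [h2]
      congr 1
      exact Subtype.ext hax
    have hbot : K0 = ⊥ := hf K0 hK0H hK0n hK0f
    -- conclude K = ⊥
    rw [eq_bot_iff]
    intro x hx
    have hr : x.right = 1 := ((mem_HDot_iff H _).1 (hKH hx)).1
    have hxl : x.left ∈ P := by
      show (SemidirectProduct.inl x.left : GDot G) ∈ K
      rw [← eq_inl_left x hr]
      exact hx
    have hleft : x.left = 1 := by
      apply Subtype.ext
      funext n
      have := hcoord n x.left hxl
      rw [hbot, Subgroup.mem_bot] at this
      exact this
    have : x = 1 := by
      rw [eq_inl_left x hr, hleft, map_one]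
    rw [this]
    exact Subgroup.one_mem ⊥
  · -- index computation
    set N : Subgroup (GDot G) :=
      (SemidirectProduct.rightHom :
        GDot G →* Multiplicative (ZMod 2)).ker with hN
    have hle : HDot H ≤ N := by
      intro x hx
      exact ((mem_HDot_iff H x).1 hx).1
    have hNidx : N.index = 2 := by
      rw [hN, Subgroup.index_ker,
        MonoidHom.range_eq_top.2 SemidirectProduct.rightHom_surjective]
      have h := Nat.card_congr
        (Subgroup.topEquiv (G := Multiplicative (ZMod 2))).toEquiv
      rw [h, Nat.card_eq_fintype_card]
      rfl
    have hcomap : (HDot H).comap (SemidirectProduct.inl :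
        ↥(restrictedProd G) →* GDot G) = H.comap (ev0 G) := by
      ext a
      show (SemidirectProduct.inl a : GDot G) ∈ HDot H ↔ _
      rw [mem_HDot_iff]
      simp only [SemidirectProduct.left_inl, SemidirectProduct.right_inl, true_and]
      rfl
    have hrel : (HDot H).relIndex N = H.index := by
      have h1 := Subgroup.index_comap (HDot H)
        (SemidirectProduct.inl : ↥(restrictedProd G) →* GDot G)
      rw [SemidirectProduct.range_inl_eq_ker_rightHom] at h1
      rw [← hN] at h1
      rw [← h1, hcomap]
      exact Subgroup.index_comap_of_surjective _ (ev0_surjective G)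
    have := Subgroup.relIndex_mul_index hle
    rw [hrel, hNidx] at this
    omega
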